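/- Let μ₁, …, μ_n, μ_m be pairwise distinct reals and let χ̃₁, …, χ̃_n, χ̃_m : ℝ → ℝ be functions. Suppose for 2 ≤ k ≤ n the recursions χ̃^{(k)}_j(x) = (μ_j − μ_{k−1})·χ̃^{(k−1)}_j(x)/χ̃^{(k−1)}_{k−1}(x) hold, where χ̃^{(1)}_j = χ̃_j, and all denominators are nonzero. Then χ̃^{(n)}_m(x) = (∏_{j=1}^{n−1}(μ_m−μ_j) / ∏_{k=1}^{n−2}(μ_{n−1}−μ_k)) · χ̃_m(x)/χ̃_{n−1}(x). -/

import Mathlib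

theorem aux15 (μ : ℕ → ℝ) (χ : ℕ → ℕ → ℝ → ℝ) (x : ℝ) :
    ∀ n, 2 ≤ n →
    (∀ k, 1 ≤ k → k ≤ n - 1 → χ k k x ≠ 0) →
    (∀ k, 2 ≤ k → k ≤ n → ∀ j,
      χ k j x = (μ j - μ (k-1)) * χ (k-1) j x / χ (k-1) (k-1) x) →
    ∀ m, χ n m x =
      ((∏ j ∈ Finset.Icc 1 (n-1), (μ m - μ j)) /
       (∏ k ∈ Finset.Icc 1 (n-2), (μ (n-1) - μ k))) *
      (χ 1 m x / χ 1 (n-1) x) := by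
  intro n hn
  induction n, hn using Nat.le_induction with
  | base =>
    intro hden hrec m
    rw [hrec 2 le_rfl le_rfl m]
    have h0 : Finset.Icc 1 0 = (∅ : Finset ℕ) := rfl
    simp [Finset.Icc_self, h0]
    ring
  | succ n hn ih =>
    intro hden hrec m
    obtain ⟨p, rfl⟩ : ∃ p, n = p + 2 := ⟨n - 2, by omega⟩
    have ih' := ih (fun k hk1 hk2 => hden k hk1 (by omega))
      (fun k hk1 hk2 j => hrec k hk1 (by omega) j)
    have hm := ih' m
    have hn2 := ih' (p+2)
    have hD : χ (p+2) (p+2) x ≠ 0 := hden (p+2) (by omega) (by omega)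
    rw [hn2] at hD
    have e1 : p+2-1 = p+1 := rfl
    have e2 : p+2-2 = p := rfl
    rw [e1, e2] at hm hn2 hD
    have hQ : (∏ k ∈ Finset.Icc 1 p, (μ (p+1) - μ k)) ≠ 0 := by
      intro h; apply hD; simp [h]
    have hP : (∏ j ∈ Finset.Icc 1 (p+1), (μ (p+2) - μ j)) ≠ 0 := by
      intro h; apply hD; simp [h]
    have hχ2 : χ 1 (p+2) x ≠ 0 := by
      intro h; apply hD; simp [h]
    have hχ1 : χ 1 (p+1) x ≠ 0 := by
      intro h; apply hD; simp [h]
    rw [hrec (p+3) (by omega) le_rfl m]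
    have e3 : p+3-1 = p+2 := rfl
    have e4 : p+3-2 = p+1 := rfl
    rw [e3, e4, hm, hn2]
    rw [Finset.prod_Icc_succ_top (by omega : 1 ≤ p+2) (fun j => μ m - μ j)]
    rw [show (p : ℕ)+1+1 = p+2 from rfl]
    field_simp

/-- Closed form of the recursion
χ̃^{(k)}_j(x) = (μ_j − μ_{k−1})·χ̃^{(k−1)}_j(x)/χ̃^{(k−1)}_{k−1}(x):
χ̃^{(n)}_m(x) = (∏_{j=1}^{n−1}(μ_m−μ_j)/∏_{k=1}^{n−2}(μ_{n−1}−μ_k))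
· χ̃^{(1)}_m(x)/χ̃^{(1)}_{n−1}(x). -/
theorem stmt_15 (n m : ℕ) (hn : 2 ≤ n) (μ : ℕ → ℝ) (χ : ℕ → ℕ → ℝ → ℝ) (x : ℝ)
    (hdist : ∀ i ∈ insert m (Finset.Icc 1 n), ∀ j ∈ insert m (Finset.Icc 1 n),
      i ≠ j → μ i ≠ μ j)
    (hden : ∀ k, 1 ≤ k → k ≤ n - 1 → χ k k x ≠ 0)
    (hrec : ∀ k, 2 ≤ k → k ≤ n → ∀ j,
      χ k j x = (μ j - μ (k-1)) * χ (k-1) j x / χ (k-1) (k-1) x) :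
    χ n m x =
      ((∏ j ∈ Finset.Icc 1 (n-1), (μ m - μ j)) /
       (∏ k ∈ Finset.Icc 1 (n-2), (μ (n-1) - μ k))) *
      (χ 1 m x / χ 1 (n-1) x) := by
  exact aux15 μ χ x n hn hden hrec m
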